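/- The relative energy is nonnegative and vanishes exactly at coinciding states: for all ρ > 0, θ > 0, ρ̃ > 0, θ̃ > 0 and all u, ũ ∈ ℝ^d, the quantity E(ρ,θ,u | ρ̃,θ̃,ũ) = (1/2)·ρ·|u - ũ|² + ρ·e(ρ,θ) - θ̃·ρ·s(ρ,θ) - (e(ρ̃,θ̃) - θ̃·s(ρ̃,θ̃) + p(ρ̃,θ̃)/ρ̃)·ρ + p(ρ̃,θ̃) satisfies E(ρ,θ,u | ρ̃,θ̃,ũ) ≥ 0, and E(ρ,θ,u | ρ̃,θ̃,ũ) = 0 if and only if (ρ,θ,u) = (ρ̃,θ̃,ũ). -/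

import Mathlib

/-- `P(Z) = Z` for `Z ≤ Z̃`, `P(Z) = (3/5)·Z^{5/3}·Z̃^{-2/3} + (2/5)·Z̃` for `Z > Z̃`. -/
noncomputable def Pfun (Zt Z : ℝ) : ℝ :=
  if Z ≤ Zt then Z else (3 / 5) * Z ^ ((5 : ℝ) / 3) * Zt ^ (-((2 : ℝ) / 3)) + (2 / 5) * Zt

/-- `S(Z) = 1 - log(Z/Z̃)` for `Z ≤ Z̃`, `S(Z) = Z̃/Z` for `Z > Z̃`. -/
noncomputable def Sfun (Zt Z : ℝ) : ℝ :=
  if Z ≤ Zt then 1 - Real.log (Z / Zt) else Zt / Z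

/-- Pressure `p(ρ,θ) = θ^{5/2}·P(ρ·θ^{-3/2})`. -/
noncomputable def pfun (Zt ρ θ : ℝ) : ℝ :=
  θ ^ ((5 : ℝ) / 2) * Pfun Zt (ρ * θ ^ (-((3 : ℝ) / 2)))

/-- Specific internal energy `e(ρ,θ) = (3/2)·θ^{5/2}·P(ρ·θ^{-3/2})/ρ`. -/
noncomputable def efun (Zt ρ θ : ℝ) : ℝ :=
  (3 / 2) * θ ^ ((5 : ℝ) / 2) * Pfun Zt (ρ * θ ^ (-((3 : ℝ) / 2))) / ρ

/-- Specific entropy `s(ρ,θ) = S(ρ·θ^{-3/2})`. -/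
noncomputable def sfun (Zt ρ θ : ℝ) : ℝ :=
  Sfun Zt (ρ * θ ^ (-((3 : ℝ) / 2)))

lemma key_log {x : ℝ} (hx : 0 < x) : 0 ≤ x - 1 - Real.log x := by
  have := Real.log_le_sub_one_of_pos hx; linarith
lemma key_log' {x : ℝ} (hx : 0 < x) (hne : x ≠ 1) : 0 < x - 1 - Real.log x := by
  have := Real.log_lt_sub_one_of_pos hx hne; linarith
lemma key_poly' {a b : ℝ} (ha : 0 ≤ a) (hb : 0 ≤ b) (hne : a ≠ b) :
    0 < 3*a^5 + 2*b^5 - 5*a^3*b^2 := by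
  have h : 3*a^5 + 2*b^5 - 5*a^3*b^2 = (a-b)^2*(3*a^3+6*a^2*b+4*a*b^2+2*b^3) := by ring
  rw [h]
  have h1 : 0 < (a-b)^2 := by
    have h := sub_ne_zero.mpr hne
    exact (sq_abs (a-b)) ▸ pow_pos (abs_pos.mpr h) 2
  have h2 : 0 < 3*a^3+6*a^2*b+4*a*b^2+2*b^3 := by
    rcases ha.lt_or_eq with ha' | ha'
    · positivity
    · rcases hb.lt_or_eq with hb' | hb'
      · positivity
      · exfalso; exact hne (ha' ▸ hb' ▸ rfl)
  exact mul_pos h1 h2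

lemma rp52 {x : ℝ} (hx : 0 < x) : x ^ ((5:ℝ)/2) = (x ^ ((1:ℝ)/2))^5 := by
  rw [← Real.rpow_natCast (x ^ ((1:ℝ)/2)) 5, ← Real.rpow_mul hx.le]; norm_num
lemma rp32 {x : ℝ} (hx : 0 < x) : x ^ ((3:ℝ)/2) = (x ^ ((1:ℝ)/2))^3 := by
  rw [← Real.rpow_natCast (x ^ ((1:ℝ)/2)) 3, ← Real.rpow_mul hx.le]; norm_num
lemma rp22 {x : ℝ} (hx : 0 < x) : x = (x ^ ((1:ℝ)/2))^2 := by
  rw [← Real.rpow_natCast (x ^ ((1:ℝ)/2)) 2, ← Real.rpow_mul hx.le]; norm_num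
lemma rp53 {x : ℝ} (hx : 0 < x) : x ^ ((5:ℝ)/3) = (x ^ ((1:ℝ)/3))^5 := by
  rw [← Real.rpow_natCast (x ^ ((1:ℝ)/3)) 5, ← Real.rpow_mul hx.le]; norm_num
lemma rp33 {x : ℝ} (hx : 0 < x) : x = (x ^ ((1:ℝ)/3))^3 := by
  rw [← Real.rpow_natCast (x ^ ((1:ℝ)/3)) 3, ← Real.rpow_mul hx.le]; norm_num
lemma rpneg23 {x : ℝ} (hx : 0 < x) : x ^ (-((2:ℝ)/3)) = ((x ^ ((1:ℝ)/3))^2)⁻¹ := by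
  rw [show ((x ^ ((1:ℝ)/3))^2) = x ^ ((2:ℝ)/3) by
    rw [← Real.rpow_natCast (x ^ ((1:ℝ)/3)) 2, ← Real.rpow_mul hx.le]; norm_num,
    ← Real.rpow_neg hx.le]

lemma hot_val {Zt ρ θ θt : ℝ} (hZt : 0 < Zt) (hρ : 0 < ρ) (hθ : 0 < θ)
    (cond : ρ * θ ^ (-((3:ℝ)/2)) ≤ Zt) :
    (3/2)*θ^((5:ℝ)/2)*Pfun Zt (ρ*θ^(-((3:ℝ)/2))) - θt*ρ*Sfun Zt (ρ*θ^(-((3:ℝ)/2)))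
    = (3/2)*ρ*θ - θt*ρ*(1 - (Real.log ρ - (3/2)*Real.log θ - Real.log Zt)) := by
  have hZpos : (0:ℝ) < ρ * θ ^ (-((3:ℝ)/2)) := by positivity
  rw [Pfun, Sfun, if_pos cond, if_pos cond]
  have h1 : θ^((5:ℝ)/2) * (ρ*θ^(-((3:ℝ)/2))) = ρ * θ := by
    rw [show θ^((5:ℝ)/2) * (ρ*θ^(-((3:ℝ)/2))) = ρ * (θ^((5:ℝ)/2) * θ^(-((3:ℝ)/2))) by ring,
      ← Real.rpow_add hθ]
    norm_num
  have h2 : Real.log (ρ*θ^(-((3:ℝ)/2)) / Zt)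
      = Real.log ρ - (3/2)*Real.log θ - Real.log Zt := by
    rw [Real.log_div hZpos.ne' hZt.ne', Real.log_mul hρ.ne' (by positivity),
      Real.log_rpow hθ]
    ring
  rw [h2, show (3:ℝ)/2*θ^((5:ℝ)/2)*(ρ*θ^(-((3:ℝ)/2))) = 3/2*(θ^((5:ℝ)/2)*(ρ*θ^(-((3:ℝ)/2)))) by ring, h1]
  ring

lemma cold_val {Zt ρ θ θt : ℝ} (hZt : 0 < Zt) (hρ : 0 < ρ) (hθ : 0 < θ)
    (cond : ¬ (ρ * θ ^ (-((3:ℝ)/2)) ≤ Zt)) :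
    (3/2)*θ^((5:ℝ)/2)*Pfun Zt (ρ*θ^(-((3:ℝ)/2))) - θt*ρ*Sfun Zt (ρ*θ^(-((3:ℝ)/2)))
    = (9/10)*ρ^((5:ℝ)/3)*Zt^(-((2:ℝ)/3)) + (3/5)*Zt*(θ^((1:ℝ)/2))^5 - θt*Zt*(θ^((1:ℝ)/2))^3 := by
  have hZpos : (0:ℝ) < ρ * θ ^ (-((3:ℝ)/2)) := by positivity
  rw [Pfun, Sfun, if_neg cond, if_neg cond]
  have h1 : θ^((5:ℝ)/2) * (ρ*θ^(-((3:ℝ)/2)))^((5:ℝ)/3) = ρ^((5:ℝ)/3) := by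
    rw [Real.mul_rpow hρ.le (by positivity), ← Real.rpow_mul hθ.le]
    rw [show θ^((5:ℝ)/2) * (ρ^((5:ℝ)/3) * θ^(-((3:ℝ)/2) * ((5:ℝ)/3)))
      = ρ^((5:ℝ)/3) * (θ^((5:ℝ)/2) * θ^(-((3:ℝ)/2) * ((5:ℝ)/3))) by ring, ← Real.rpow_add hθ]
    norm_num
  have h2 : Zt / (ρ*θ^(-((3:ℝ)/2))) = Zt * (θ^((1:ℝ)/2))^3 / ρ := by
    rw [← rp32 hθ, Real.rpow_neg hθ.le]
    rw [div_eq_div_iff (by positivity) hρ.ne']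
    field_simp
  rw [h2, show (3:ℝ)/2*θ^((5:ℝ)/2)*((3/5)*(ρ*θ^(-((3:ℝ)/2)))^((5:ℝ)/3)*Zt^(-((2:ℝ)/3)) + (2/5)*Zt)
    = (9/10)*(θ^((5:ℝ)/2)*(ρ*θ^(-((3:ℝ)/2)))^((5:ℝ)/3))*Zt^(-((2:ℝ)/3)) + (3/5)*Zt*θ^((5:ℝ)/2) by ring,
    h1, rp52 hθ]
  field_simp

set_option maxHeartbeats 2000000 in
lemma M1strict (Zt ρ θ θt : ℝ) (hZt : 0 < Zt) (hρ : 0 < ρ) (hθ : 0 < θ) (hθt : 0 < θt)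
    (hne : θ ≠ θt) :
    (3/2)*θt^((5:ℝ)/2)*Pfun Zt (ρ*θt^(-((3:ℝ)/2))) - θt*ρ*Sfun Zt (ρ*θt^(-((3:ℝ)/2)))
    < (3/2)*θ^((5:ℝ)/2)*Pfun Zt (ρ*θ^(-((3:ℝ)/2))) - θt*ρ*Sfun Zt (ρ*θ^(-((3:ℝ)/2))) := by
  by_cases h1 : ρ * θ ^ (-((3:ℝ)/2)) ≤ Zt <;> by_cases h2 : ρ * θt ^ (-((3:ℝ)/2)) ≤ Zt
  · -- both hot
    rw [hot_val hZt hρ hθ h1, hot_val hZt hρ hθt h2]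
    have hx : (0:ℝ) < θ/θt := div_pos hθ hθt
    have hx1 : θ/θt ≠ 1 := by
      intro h; exact hne (by field_simp at h; linarith)
    have key : Real.log θ - Real.log θt < θ/θt - 1 := by
      have := Real.log_lt_sub_one_of_pos hx hx1
      rwa [Real.log_div hθ.ne' hθt.ne'] at this
    have key2 : (3/2)*ρ*θt*(Real.log θ - Real.log θt) < (3/2)*ρ*(θ - θt) := by
      have h := mul_lt_mul_of_pos_left key (show (0:ℝ) < (3/2)*ρ*θt by positivity)
      have e : (3/2)*ρ*θt*(θ/θt - 1) = (3/2)*ρ*(θ - θt) := by field_simp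
      linarith [e ▸ h]
    nlinarith [key2]
  · -- θ hot, θt cold
    rw [hot_val hZt hρ hθ h1, cold_val hZt hρ hθt h2]
    set θ0 : ℝ := (ρ/Zt) ^ ((2:ℝ)/3) with hθ0def
    have hθ0 : 0 < θ0 := Real.rpow_pos_of_pos (div_pos hρ hZt) _
    have hθ032 : θ0 ^ ((3:ℝ)/2) = ρ/Zt := by
      rw [hθ0def, ← Real.rpow_mul (div_pos hρ hZt).le]; norm_num
    set s : ℝ := θ0 ^ ((1:ℝ)/2) with hsdef
    set q : ℝ := θt ^ ((1:ℝ)/2) with hqdef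
    have hs : 0 < s := Real.rpow_pos_of_pos hθ0 _
    have hq : 0 < q := Real.rpow_pos_of_pos hθt _
    have hθ0s : θ0 = s^2 := rp22 hθ0
    have hθtq : θt = q^2 := rp22 hθt
    have hρeq : ρ = Zt * s^3 := by
      rw [← rp32 hθ0, hθ032]; field_simp
    have hθtθ0 : θt < θ0 := by
      have h2' : Zt < ρ * θt ^ (-((3:ℝ)/2)) := lt_of_not_ge h2
      have hlt : θt ^ ((3:ℝ)/2) < ρ / Zt := by
        rw [Real.rpow_neg hθt.le] at h2'
        rw [lt_div_iff₀ hZt]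
        have hp : (0:ℝ) < θt ^ ((3:ℝ)/2) := Real.rpow_pos_of_pos hθt _
        calc θt ^ ((3:ℝ)/2) * Zt < θt ^ ((3:ℝ)/2) * (ρ * (θt ^ ((3:ℝ)/2))⁻¹) :=
              mul_lt_mul_of_pos_left h2' hp
          _ = ρ := by field_simp
      calc θt = (θt ^ ((3:ℝ)/2)) ^ ((2:ℝ)/3) := by
            rw [← Real.rpow_mul hθt.le]; norm_num
        _ < (ρ/Zt) ^ ((2:ℝ)/3) := Real.rpow_lt_rpow (by positivity) hlt (by norm_num)
    have hθ0θ : θ0 ≤ θ := by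
      have hle : ρ / Zt ≤ θ ^ ((3:ℝ)/2) := by
        rw [Real.rpow_neg hθ.le] at h1
        rw [div_le_iff₀ hZt]
        have hp : (0:ℝ) < θ ^ ((3:ℝ)/2) := Real.rpow_pos_of_pos hθ _
        calc ρ = θ ^ ((3:ℝ)/2) * (ρ * (θ ^ ((3:ℝ)/2))⁻¹) := by field_simp
          _ ≤ θ ^ ((3:ℝ)/2) * Zt := mul_le_mul_of_nonneg_left h1 hp.le
      calc θ0 ≤ (θ ^ ((3:ℝ)/2)) ^ ((2:ℝ)/3) :=
            Real.rpow_le_rpow (by positivity) hle (by norm_num)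
        _ = θ := by rw [← Real.rpow_mul hθ.le]; norm_num
    have hsq : s ≠ q := by
      intro h
      exact hθtθ0.ne (by rw [hθtq, hθ0s, h])
    have F2 : 0 < Zt*(3*s^5 + 2*q^5 - 5*s^3*q^2) :=
      mul_pos hZt (key_poly' hs.le hq.le hsq)
    have hX : (9:ℝ)/10 * ρ^((5:ℝ)/3)*Zt^(-((2:ℝ)/3)) = 9/10*(Zt * s^5) := by
      rw [hρeq, Real.mul_rpow hZt.le (by positivity),
        show ((s^3 : ℝ) ^ ((5:ℝ)/3)) = s^5 by
          rw [← Real.rpow_natCast s 3, ← Real.rpow_mul hs.le,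
            ← Real.rpow_natCast s 5]; norm_num,
        show (9:ℝ)/10 * (Zt ^ ((5:ℝ)/3) * s^5) * Zt^(-((2:ℝ)/3))
          = (9:ℝ)/10 * (Zt^((5:ℝ)/3) * Zt^(-((2:ℝ)/3))) * s^5 by ring,
        ← Real.rpow_add hZt]
      norm_num; ring
    have hlρ : Real.log ρ = Real.log Zt + (3/2) * Real.log θ0 := by
      rw [hρeq, ← rp32 hθ0, Real.log_mul hZt.ne' (by positivity), Real.log_rpow hθ0]
    have l1 : 0 ≤ Real.log θ - Real.log θ0 := by
      have := Real.log_le_log hθ0 hθ0θ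
      linarith
    have l2 : Real.log θ - Real.log θ0 ≤ θ/θ0 - 1 := by
      have := Real.log_le_sub_one_of_pos (div_pos hθ hθ0)
      rwa [Real.log_div hθ.ne' hθ0.ne'] at this
    have A6 : θt * (Real.log θ - Real.log θ0) ≤ θ - θ0 := by
      have e1 : θt * (Real.log θ - Real.log θ0) ≤ θ0 * (Real.log θ - Real.log θ0) :=
        mul_le_mul_of_nonneg_right hθtθ0.le l1
      have e2 : θ0 * (Real.log θ - Real.log θ0) ≤ θ0 * (θ/θ0 - 1) :=
        mul_le_mul_of_nonneg_left l2 hθ0.le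
      have e3 : θ0 * (θ/θ0 - 1) = θ - θ0 := by field_simp
      linarith
    have A6' : Zt*s^3*q^2*(Real.log θ - Real.log θ0) ≤ Zt*s^3*(θ - s^2) := by
      have hpos : (0:ℝ) ≤ Zt*s^3 := by positivity
      have h := mul_le_mul_of_nonneg_left A6 hpos
      calc Zt*s^3*q^2*(Real.log θ - Real.log θ0)
          = Zt*s^3*(θt * (Real.log θ - Real.log θ0)) := by rw [hθtq]; ring
        _ ≤ Zt*s^3*(θ - θ0) := h
        _ = Zt*s^3*(θ - s^2) := by rw [hθ0s]
    rw [show (9:ℝ)/10 * ρ^((5:ℝ)/3)*Zt^(-((2:ℝ)/3)) + 3/5*Zt*q^5 - θt*Zt*q^3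
        = (9:ℝ)/10 * ρ^((5:ℝ)/3)*Zt^(-((2:ℝ)/3)) + 3/5*Zt*q^5 - θt*Zt*q^3 from rfl,
      hX, hlρ, hρeq, hθtq]
    nlinarith [F2, A6']
  · -- θ cold, θt hot
    rw [cold_val hZt hρ hθ h1, hot_val hZt hρ hθt h2]
    set θ0 : ℝ := (ρ/Zt) ^ ((2:ℝ)/3) with hθ0def
    have hθ0 : 0 < θ0 := Real.rpow_pos_of_pos (div_pos hρ hZt) _
    have hθ032 : θ0 ^ ((3:ℝ)/2) = ρ/Zt := by
      rw [hθ0def, ← Real.rpow_mul (div_pos hρ hZt).le]; norm_num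
    set s : ℝ := θ0 ^ ((1:ℝ)/2) with hsdef
    set p : ℝ := θ ^ ((1:ℝ)/2) with hpdef
    have hs : 0 < s := Real.rpow_pos_of_pos hθ0 _
    have hp : 0 < p := Real.rpow_pos_of_pos hθ _
    have hθ0s : θ0 = s^2 := rp22 hθ0
    have hθp : θ = p^2 := rp22 hθ
    have hρeq : ρ = Zt * s^3 := by
      rw [← rp32 hθ0, hθ032]; field_simp
    have hθθ0 : θ < θ0 := by
      have h1' : Zt < ρ * θ ^ (-((3:ℝ)/2)) := lt_of_not_ge h1
      have hlt : θ ^ ((3:ℝ)/2) < ρ / Zt := by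
        rw [Real.rpow_neg hθ.le] at h1'
        rw [lt_div_iff₀ hZt]
        have hpp : (0:ℝ) < θ ^ ((3:ℝ)/2) := Real.rpow_pos_of_pos hθ _
        calc θ ^ ((3:ℝ)/2) * Zt < θ ^ ((3:ℝ)/2) * (ρ * (θ ^ ((3:ℝ)/2))⁻¹) :=
              mul_lt_mul_of_pos_left h1' hpp
          _ = ρ := by field_simp
      calc θ = (θ ^ ((3:ℝ)/2)) ^ ((2:ℝ)/3) := by
            rw [← Real.rpow_mul hθ.le]; norm_num
        _ < (ρ/Zt) ^ ((2:ℝ)/3) := Real.rpow_lt_rpow (by positivity) hlt (by norm_num)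
    have hθ0θt : θ0 ≤ θt := by
      have hle : ρ / Zt ≤ θt ^ ((3:ℝ)/2) := by
        rw [Real.rpow_neg hθt.le] at h2
        rw [div_le_iff₀ hZt]
        have hpp : (0:ℝ) < θt ^ ((3:ℝ)/2) := Real.rpow_pos_of_pos hθt _
        calc ρ = θt ^ ((3:ℝ)/2) * (ρ * (θt ^ ((3:ℝ)/2))⁻¹) := by field_simp
          _ ≤ θt ^ ((3:ℝ)/2) * Zt := mul_le_mul_of_nonneg_left h2 hpp.le
      calc θ0 ≤ (θt ^ ((3:ℝ)/2)) ^ ((2:ℝ)/3) :=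
            Real.rpow_le_rpow (by positivity) hle (by norm_num)
        _ = θt := by rw [← Real.rpow_mul hθt.le]; norm_num
    have hps : p < s := by
      have h2' : p^2 < s^2 := by rw [← hθp, ← hθ0s]; exact hθθ0
      exact lt_of_pow_lt_pow_left₀ 2 hs.le h2'
    have F2 : 0 < Zt*(3*p^5 + 2*s^5 - 5*p^3*s^2) :=
      mul_pos hZt (key_poly' hp.le hs.le hps.ne)
    have hX : (9:ℝ)/10 * ρ^((5:ℝ)/3)*Zt^(-((2:ℝ)/3)) = 9/10*(Zt * s^5) := by
      rw [hρeq, Real.mul_rpow hZt.le (by positivity),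
        show ((s^3 : ℝ) ^ ((5:ℝ)/3)) = s^5 by
          rw [← Real.rpow_natCast s 3, ← Real.rpow_mul hs.le,
            ← Real.rpow_natCast s 5]; norm_num,
        show (9:ℝ)/10 * (Zt ^ ((5:ℝ)/3) * s^5) * Zt^(-((2:ℝ)/3))
          = (9:ℝ)/10 * (Zt^((5:ℝ)/3) * Zt^(-((2:ℝ)/3))) * s^5 by ring,
        ← Real.rpow_add hZt]
      norm_num; ring
    have hlρ : Real.log ρ = Real.log Zt + (3/2) * Real.log θ0 := by
      rw [hρeq, ← rp32 hθ0, Real.log_mul hZt.ne' (by positivity), Real.log_rpow hθ0]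
    have B4 : Zt*(θt*(p^3-s^3)) ≤ Zt*(s^2*(p^3-s^3)) := by
      apply mul_le_mul_of_nonneg_left _ hZt.le
      apply mul_le_mul_of_nonpos_right _
        (by nlinarith [pow_le_pow_left₀ hp.le hps.le 3] : p^3 - s^3 ≤ 0)
      linarith [hθ0s ▸ hθ0θt]
    have B5 : 0 ≤ s^2 - θt - θt*(Real.log θ0 - Real.log θt) := by
      have hx : (0:ℝ) < θ0/θt := div_pos hθ0 hθt
      have hk := key_log hx
      have e : Real.log (θ0/θt) = Real.log θ0 - Real.log θt :=
        Real.log_div hθ0.ne' hθt.ne'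
      rw [e] at hk
      have hk2 := mul_nonneg hθt.le hk
      have e2 : θt * (θ0/θt - 1 - (Real.log θ0 - Real.log θt))
          = θ0 - θt - θt*(Real.log θ0 - Real.log θt) := by field_simp
      rw [← hθ0s]
      linarith [e2 ▸ hk2]
    have B5' : 0 ≤ Zt*s^3*(s^2 - θt - θt*(Real.log θ0 - Real.log θt)) :=
      mul_nonneg (by positivity) B5
    rw [hX, hlρ, hρeq]
    nlinarith [F2, B4, B5']
  · -- both cold
    rw [cold_val hZt hρ hθ h1, cold_val hZt hρ hθt h2]
    set p : ℝ := θ ^ ((1:ℝ)/2) with hpdef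
    set q : ℝ := θt ^ ((1:ℝ)/2) with hqdef
    have hp : 0 < p := Real.rpow_pos_of_pos hθ _
    have hq : 0 < q := Real.rpow_pos_of_pos hθt _
    have hθp : θ = p^2 := rp22 hθ
    have hθtq : θt = q^2 := rp22 hθt
    have hpq : p ≠ q := by
      intro h; exact hne (by rw [hθp, hθtq, h])
    have F2 : 0 < Zt*(3*p^5 + 2*q^5 - 5*p^3*q^2) :=
      mul_pos hZt (key_poly' hp.le hq.le hpq)
    rw [hθtq]
    nlinarith [F2]

set_option maxHeartbeats 2000000 in
lemma Breg (Zt Z W : ℝ) (hZt : 0 < Zt) (hZ : 0 < Z) (hW : 0 < W) (hne : Z ≠ W) :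
    0 < ((3/2)*Pfun Zt Z - Z*Sfun Zt Z) - ((3/2)*Pfun Zt W - W*Sfun Zt W)
      - ((5/2)*Pfun Zt W/W - Sfun Zt W)*(Z - W) := by
  by_cases hZ1 : Z ≤ Zt <;> by_cases hW1 : W ≤ Zt
  · -- both hot
    rw [Pfun, Sfun, if_pos hZ1, if_pos hZ1, Pfun, Sfun, if_pos hW1, if_pos hW1]
    have hx : (0:ℝ) < W/Z := div_pos hW hZ
    have hx1 : W/Z ≠ 1 := by
      intro h; rw [div_eq_one_iff_eq hZ.ne'] at h; exact hne h.symm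
    have key : Real.log W - Real.log Z < W/Z - 1 := by
      have := Real.log_lt_sub_one_of_pos hx hx1
      rwa [Real.log_div hW.ne' hZ.ne'] at this
    have key2 : Z*(Real.log W - Real.log Z) < W - Z := by
      have h := mul_lt_mul_of_pos_left key hZ
      have e : Z*(W/Z - 1) = W - Z := by field_simp
      linarith [e ▸ h]
    rw [Real.log_div hZ.ne' hZt.ne', Real.log_div hW.ne' hZt.ne',
      show (5:ℝ)/2*W/W = 5/2 by field_simp]
    nlinarith [key2]
  · -- Z hot, W cold
    rw [Pfun, Sfun, if_pos hZ1, if_pos hZ1, Pfun, Sfun, if_neg hW1, if_neg hW1]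
    have hlog : Real.log (Z/Zt) = - Real.log (Zt/Z) := by
      rw [← Real.log_inv]; congr 1; rw [inv_div]
    rw [rp53 hW, rpneg23 hZt, hlog]
    set L : ℝ := Real.log (Zt/Z) with hLdef
    set b : ℝ := W ^ ((1:ℝ)/3) with hbdef
    set c : ℝ := Zt ^ ((1:ℝ)/3) with hcdef
    have hb : 0 < b := Real.rpow_pos_of_pos hW _
    have hc : 0 < c := Real.rpow_pos_of_pos hZt _
    have hWb : W = b^3 := rp33 hW
    have hZtc : Zt = c^3 := rp33 hZt
    have hcb : c < b := by
      have h' : c^3 < b^3 := by rw [← hWb, ← hZtc]; exact lt_of_not_ge hW1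
      exact lt_of_pow_lt_pow_left₀ 3 hb.le h'
    have F2 : 0 < 3*c^5 + 2*b^5 - 5*c^3*b^2 := key_poly' hc.le hb.le hcb.ne
    have F1 : 0 ≤ Zt/Z - 1 - L := key_log (div_pos hZt hZ)
    have F1' : 0 ≤ Zt - Z - Z * L := by
      have h := mul_nonneg hZ.le F1
      have e : Z * (Zt/Z - 1 - L) = Zt - Z - Z * L := by field_simp
      linarith [e ▸ h]
    rw [hZtc] at F1' hZ1
    have F1'' : 0 ≤ c^2 * (c^3 - Z - Z * L) := mul_nonneg (by positivity) (by linarith)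
    have P1 : 0 ≤ (c^3 - Z) * (b^2 - c^2) := by
      apply mul_nonneg (by linarith)
      nlinarith [hcb, hc, hb]
    rw [hWb, hZtc]
    have hA : ((3:ℝ)/2)*Z - Z*(1 - -L) -
        ((3/2)*((3/5)*b^5*((c^2)⁻¹) + (2/5)*(c^3)) - b^3*((c^3)/(b^3))) -
        ((5/2)*((3/5)*b^5*((c^2)⁻¹) + (2/5)*(c^3))/(b^3) - (c^3)/(b^3))*(Z - b^3)
        = (c^2 * (c^3 - Z - Z * L) + (3/2)*((c^3 - Z)*(b^2 - c^2))
          + (3/10)*(3*c^5 + 2*b^5 - 5*c^3*b^2)) / (c^2) := by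
      field_simp
      ring
    rw [show (3:ℝ)/2*Z - Z*(1 - -L) = (3:ℝ)/2*Z - Z*(1 - -L) from rfl]
    rw [hA]
    exact div_pos (by linarith) (by positivity)
  · -- Z cold, W hot
    rw [Pfun, Sfun, if_neg hZ1, if_neg hZ1, Pfun, Sfun, if_pos hW1, if_pos hW1]
    rw [show (5:ℝ)/2*W/W = 5/2 by field_simp, rp53 hZ, rpneg23 hZt]
    set M : ℝ := Real.log (W/Zt) with hMdef
    set a : ℝ := Z ^ ((1:ℝ)/3) with hadef
    set c : ℝ := Zt ^ ((1:ℝ)/3) with hcdef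
    have ha : 0 < a := Real.rpow_pos_of_pos hZ _
    have hc : 0 < c := Real.rpow_pos_of_pos hZt _
    have hZa : Z = a^3 := rp33 hZ
    have hZtc : Zt = c^3 := rp33 hZt
    have hca : c < a := by
      have h' : c^3 < a^3 := by rw [← hZa, ← hZtc]; exact lt_of_not_ge hZ1
      exact lt_of_pow_lt_pow_left₀ 3 ha.le h'
    have F2 : 0 < 3*a^5 + 2*c^5 - 5*a^3*c^2 := key_poly' ha.le hc.le hca.ne'
    have hM : M ≤ 0 := Real.log_nonpos (by positivity) (by
      rw [div_le_one hZt]; exact hW1)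
    have F1 : 0 ≤ W/Zt - 1 - M := key_log (div_pos hW hZt)
    have F1' : 0 ≤ W - Zt - Zt * M := by
      have h := mul_nonneg hZt.le F1
      have e : Zt * (W/Zt - 1 - M) = W - Zt - Zt * M := by field_simp
      linarith [e ▸ h]
    rw [hZtc] at F1'
    have h1 : 0 ≤ c^2 * (W - c^3 - c^3*M) := mul_nonneg (by positivity) (by linarith)
    have h2 : 0 ≤ c^2 * (-M*(a^3-c^3)) := by
      apply mul_nonneg (by positivity)
      apply mul_nonneg (by linarith)
      nlinarith [hca, hc, ha]
    rw [hZa, hZtc]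
    have hA : ((3:ℝ)/2)*((3/5)*a^5*((c^2)⁻¹) + (2/5)*(c^3)) - a^3*((c^3)/(a^3)) -
        ((3/2)*W - W*(1 - M)) - ((5/2) - (1 - M))*(a^3 - W)
        = (c^2*(W - c^3 - c^3*M) + c^2*(-M*(a^3-c^3))
          + (3/10)*(3*a^5 + 2*c^5 - 5*a^3*c^2)) / (c^2) := by
      field_simp
      ring
    rw [hA]
    exact div_pos (by linarith) (by positivity)
  · -- both cold
    rw [Pfun, Sfun, if_neg hZ1, if_neg hZ1, Pfun, Sfun, if_neg hW1, if_neg hW1]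
    rw [rp53 hZ, rp53 hW, rpneg23 hZt]
    set a : ℝ := Z ^ ((1:ℝ)/3) with hadef
    set b : ℝ := W ^ ((1:ℝ)/3) with hbdef
    set c : ℝ := Zt ^ ((1:ℝ)/3) with hcdef
    have ha : 0 < a := Real.rpow_pos_of_pos hZ _
    have hb : 0 < b := Real.rpow_pos_of_pos hW _
    have hc : 0 < c := Real.rpow_pos_of_pos hZt _
    have hZa : Z = a^3 := rp33 hZ
    have hWb : W = b^3 := rp33 hW
    have hZtc : Zt = c^3 := rp33 hZt
    have hab : a ≠ b := by
      intro h; exact hne (by rw [hZa, hWb, h])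
    have F2 : 0 < 3*a^5 + 2*b^5 - 5*a^3*b^2 := key_poly' ha.le hb.le hab
    rw [hZa, hWb, hZtc]
    have hA : ((3:ℝ)/2)*((3/5)*a^5*((c^2)⁻¹) + (2/5)*(c^3)) - a^3*((c^3)/(a^3)) -
        ((3/2)*((3/5)*b^5*((c^2)⁻¹) + (2/5)*(c^3)) - b^3*((c^3)/(b^3))) -
        ((5/2)*((3/5)*b^5*((c^2)⁻¹) + (2/5)*(c^3))/(b^3) - (c^3)/(b^3))*(a^3 - b^3)
        = (3*(3*a^5 + 2*b^5 - 5*a^3*b^2)) / (10*(c^2)) := by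
      field_simp
      ring
    rw [hA]
    exact div_pos (by linarith) (by positivity)

set_option maxHeartbeats 1000000 in
lemma M2strict (Zt θt ρ ρt : ℝ) (hZt : 0 < Zt) (hθt : 0 < θt) (hρ : 0 < ρ) (hρt : 0 < ρt)
    (hne : ρ ≠ ρt) :
    0 < ((3/2)*θt^((5:ℝ)/2)*Pfun Zt (ρ*θt^(-((3:ℝ)/2))) - θt*ρ*Sfun Zt (ρ*θt^(-((3:ℝ)/2))))
      - (efun Zt ρt θt - θt * sfun Zt ρt θt + pfun Zt ρt θt / ρt)*ρ + pfun Zt ρt θt := by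
  unfold efun sfun pfun
  set Z : ℝ := ρ * θt^(-((3:ℝ)/2)) with hZdef
  set W : ℝ := ρt * θt^(-((3:ℝ)/2)) with hWdef
  have hrp : (0:ℝ) < θt^(-((3:ℝ)/2)) := Real.rpow_pos_of_pos hθt _
  have hZpos : 0 < Z := mul_pos hρ hrp
  have hWpos : 0 < W := mul_pos hρt hrp
  have hZW : Z ≠ W := by
    intro h; exact hne (mul_right_cancel₀ hrp.ne' h)
  set X : ℝ := θt ^ ((3:ℝ)/2) with hXdef
  have hX : 0 < X := Real.rpow_pos_of_pos hθt _
  have hY : θt ^ ((5:ℝ)/2) = θt * X := by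
    rw [hXdef, show ((5:ℝ)/2) = 1 + (3:ℝ)/2 by norm_num, Real.rpow_add hθt, Real.rpow_one]
  have hρZ : Z * X = ρ := by
    rw [hZdef, hXdef, mul_assoc, ← Real.rpow_add hθt]
    norm_num
  have hρtW : W * X = ρt := by
    rw [hWdef, hXdef, mul_assoc, ← Real.rpow_add hθt]
    norm_num
  have key := Breg Zt Z W hZt hZpos hWpos hZW
  have hid : ((3:ℝ)/2)*θt^((5:ℝ)/2)*Pfun Zt Z - θt*ρ*Sfun Zt Z
      - ((3/2)*θt^((5:ℝ)/2)*Pfun Zt W/ρt - θt*Sfun Zt W + θt^((5:ℝ)/2)*Pfun Zt W/ρt)*ρ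
      + θt^((5:ℝ)/2)*Pfun Zt W
      = (θt*X) * (((3/2)*Pfun Zt Z - Z*Sfun Zt Z) - ((3/2)*Pfun Zt W - W*Sfun Zt W)
        - ((5/2)*Pfun Zt W/W - Sfun Zt W)*(Z - W)) := by
    rw [hY, ← hρZ, ← hρtW]
    field_simp
    ring
  rw [hid]
  exact mul_pos (mul_pos hθt hX) key

set_option maxHeartbeats 2000000 in
/-- The relative energy
`E(ρ,θ,u | ρ̃,θ̃,ũ) = (1/2)·ρ·|u - ũ|² + ρ·e(ρ,θ) - θ̃·ρ·s(ρ,θ)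
- (e(ρ̃,θ̃) - θ̃·s(ρ̃,θ̃) + p(ρ̃,θ̃)/ρ̃)·ρ + p(ρ̃,θ̃)`
is nonnegative and vanishes exactly at coinciding states. -/
theorem stmt19 (Zt : ℝ) (hZt : 0 < Zt) (d : ℕ) (hd : d = 2 ∨ d = 3)
    (ρ θ ρt θt : ℝ) (hρ : 0 < ρ) (hθ : 0 < θ) (hρt : 0 < ρt) (hθt : 0 < θt)
    (u ut : EuclideanSpace ℝ (Fin d)) :
    let E := (1 / 2) * ρ * ‖u - ut‖ ^ 2 + ρ * efun Zt ρ θ - θt * ρ * sfun Zt ρ θ -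
      (efun Zt ρt θt - θt * sfun Zt ρt θt + pfun Zt ρt θt / ρt) * ρ + pfun Zt ρt θt
    0 ≤ E ∧ (E = 0 ↔ ρ = ρt ∧ θ = θt ∧ u = ut) := by
  intro E
  have hEdef : E = (1/2) * ρ * ‖u - ut‖ ^ 2 + ρ * efun Zt ρ θ - θt * ρ * sfun Zt ρ θ -
      (efun Zt ρt θt - θt * sfun Zt ρt θt + pfun Zt ρt θt / ρt) * ρ + pfun Zt ρt θt := rfl
  have hre : ρ * efun Zt ρ θ = (3/2)*θ^((5:ℝ)/2)*Pfun Zt (ρ*θ^(-((3:ℝ)/2))) := by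
    unfold efun; field_simp
  have hsplit : E = ((1/2)*ρ*‖u - ut‖^2)
      + (((3/2)*θ^((5:ℝ)/2)*Pfun Zt (ρ*θ^(-((3:ℝ)/2))) - θt*ρ*Sfun Zt (ρ*θ^(-((3:ℝ)/2))))
        - ((3/2)*θt^((5:ℝ)/2)*Pfun Zt (ρ*θt^(-((3:ℝ)/2))) - θt*ρ*Sfun Zt (ρ*θt^(-((3:ℝ)/2)))))
      + (((3/2)*θt^((5:ℝ)/2)*Pfun Zt (ρ*θt^(-((3:ℝ)/2))) - θt*ρ*Sfun Zt (ρ*θt^(-((3:ℝ)/2))))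
        - (efun Zt ρt θt - θt * sfun Zt ρt θt + pfun Zt ρt θt / ρt)*ρ + pfun Zt ρt θt) := by
    rw [hEdef, hre]; unfold sfun; ring
  have hT1 : 0 ≤ (1/2)*ρ*‖u - ut‖^2 := by positivity
  have hT2strict : θ ≠ θt → 0 < ((3/2)*θ^((5:ℝ)/2)*Pfun Zt (ρ*θ^(-((3:ℝ)/2))) - θt*ρ*Sfun Zt (ρ*θ^(-((3:ℝ)/2))))
        - ((3/2)*θt^((5:ℝ)/2)*Pfun Zt (ρ*θt^(-((3:ℝ)/2))) - θt*ρ*Sfun Zt (ρ*θt^(-((3:ℝ)/2)))) := by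
    intro h
    have := M1strict Zt ρ θ θt hZt hρ hθ hθt h
    linarith
  have hT2eq : θ = θt → ((3/2)*θ^((5:ℝ)/2)*Pfun Zt (ρ*θ^(-((3:ℝ)/2))) - θt*ρ*Sfun Zt (ρ*θ^(-((3:ℝ)/2))))
        - ((3/2)*θt^((5:ℝ)/2)*Pfun Zt (ρ*θt^(-((3:ℝ)/2))) - θt*ρ*Sfun Zt (ρ*θt^(-((3:ℝ)/2)))) = 0 := by
    intro h; rw [h]; ring
  have hT3strict : ρ ≠ ρt → 0 < ((3/2)*θt^((5:ℝ)/2)*Pfun Zt (ρ*θt^(-((3:ℝ)/2))) - θt*ρ*Sfun Zt (ρ*θt^(-((3:ℝ)/2))))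
        - (efun Zt ρt θt - θt * sfun Zt ρt θt + pfun Zt ρt θt / ρt)*ρ + pfun Zt ρt θt :=
    M2strict Zt θt ρ ρt hZt hθt hρ hρt
  have hT3eq : ρ = ρt → ((3/2)*θt^((5:ℝ)/2)*Pfun Zt (ρ*θt^(-((3:ℝ)/2))) - θt*ρ*Sfun Zt (ρ*θt^(-((3:ℝ)/2))))
        - (efun Zt ρt θt - θt * sfun Zt ρt θt + pfun Zt ρt θt / ρt)*ρ + pfun Zt ρt θt = 0 := by
    intro h; rw [h]; unfold efun sfun pfun; field_simp; ring
  have h2' : 0 ≤ ((3/2)*θ^((5:ℝ)/2)*Pfun Zt (ρ*θ^(-((3:ℝ)/2))) - θt*ρ*Sfun Zt (ρ*θ^(-((3:ℝ)/2))))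
        - ((3/2)*θt^((5:ℝ)/2)*Pfun Zt (ρ*θt^(-((3:ℝ)/2))) - θt*ρ*Sfun Zt (ρ*θt^(-((3:ℝ)/2)))) := by
    rcases eq_or_ne θ θt with h|h
    · exact le_of_eq (hT2eq h).symm
    · exact (hT2strict h).le
  have h3' : 0 ≤ ((3/2)*θt^((5:ℝ)/2)*Pfun Zt (ρ*θt^(-((3:ℝ)/2))) - θt*ρ*Sfun Zt (ρ*θt^(-((3:ℝ)/2))))
        - (efun Zt ρt θt - θt * sfun Zt ρt θt + pfun Zt ρt θt / ρt)*ρ + pfun Zt ρt θt := by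
    rcases eq_or_ne ρ ρt with h|h
    · exact le_of_eq (hT3eq h).symm
    · exact (hT3strict h).le
  constructor
  · rw [hsplit]; linarith
  constructor
  · intro hE0
    rw [hsplit] at hE0
    have hρρt : ρ = ρt := by
      by_contra h
      have := hT3strict h
      linarith
    have hθθt : θ = θt := by
      by_contra h
      have := hT2strict h
      linarith
    refine ⟨hρρt, hθθt, ?_⟩
    have hT10 : (1/2)*ρ*‖u - ut‖^2 = 0 := by linarith
    have hx2 : ‖u - ut‖^2 = 0 := by
      by_contra hc
      have h0 : 0 < ‖u - ut‖^2 := lt_of_le_of_ne (sq_nonneg _) (Ne.symm hc)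
      have h1 : 0 < (1/2)*ρ*‖u - ut‖^2 := by positivity
      linarith
    have hx : ‖u - ut‖ = 0 := by
      have := pow_eq_zero_iff (n := 2) (by norm_num) |>.mp hx2
      exact this
    rw [norm_eq_zero, sub_eq_zero] at hx
    exact hx
  · rintro ⟨h1, h2, h3⟩
    rw [hsplit, hT2eq h2, hT3eq h1, h3]
    simp
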